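/- Let m, n be positive integers, G a real m×n matrix, a ∈ ℝ^m, and λ ≥ 0. Then the infimum over k ∈ ℝ^n of the quantity sup{‖(G + Δ)k − a‖₂ : Δ ∈ ℝ^{m×n}, ‖Δ‖_F ≤ λ} equals the infimum over k ∈ ℝ^n of ‖Gk − a‖₂ + λ‖k‖₂; moreover, k minimizes the first objective if and only if it minimizes the second. -/

import Mathlib

open scoped BigOperators

/-- Frobenius norm of a real matrix: `‖M‖_F = sqrt (∑ i j, M i j ^ 2)`. -/
noncomputable def frobeniusNorm {m n : ℕ} (M : Matrix (Fin m) (Fin n) ℝ) : ℝ :=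
  Real.sqrt (∑ i, ∑ j, (M i j) ^ 2)

/-- Euclidean norm of a real vector. -/
noncomputable def euclNorm {m : ℕ} (v : Fin m → ℝ) : ℝ :=
  Real.sqrt (∑ i, (v i) ^ 2)

/-- The robust objective: `k ↦ sup {‖(G + Δ) k − a‖₂ : ‖Δ‖_F ≤ λ}`. -/
noncomputable def robustObj {m n : ℕ} (G : Matrix (Fin m) (Fin n) ℝ) (a : Fin m → ℝ)
    (lam : ℝ) (k : Fin n → ℝ) : ℝ :=
  sSup {x : ℝ | ∃ Δ : Matrix (Fin m) (Fin n) ℝ, frobeniusNorm Δ ≤ lam ∧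
        x = euclNorm ((G + Δ).mulVec k - a)}

/-- The regularized objective: `k ↦ ‖G k − a‖₂ + λ ‖k‖₂`. -/
noncomputable def regObj {m n : ℕ} (G : Matrix (Fin m) (Fin n) ℝ) (a : Fin m → ℝ)
    (lam : ℝ) (k : Fin n → ℝ) : ℝ :=
  euclNorm (G.mulVec k - a) + lam * euclNorm k

lemma euclNorm_nonneg {m : ℕ} (v : Fin m → ℝ) : 0 ≤ euclNorm v := Real.sqrt_nonneg _

lemma euclNorm_sq {m : ℕ} (v : Fin m → ℝ) : euclNorm v ^ 2 = ∑ i, (v i) ^ 2 := by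
  rw [euclNorm, Real.sq_sqrt (Finset.sum_nonneg fun i _ => sq_nonneg _)]

lemma euclNorm_zero {m : ℕ} : euclNorm (0 : Fin m → ℝ) = 0 := by
  simp [euclNorm]

lemma euclNorm_pos {m : ℕ} {v : Fin m → ℝ} (hv : v ≠ 0) : 0 < euclNorm v := by
  rcases Function.ne_iff.1 hv with ⟨i, hi⟩
  apply Real.sqrt_pos.2
  apply Finset.sum_pos' (fun j _ => sq_nonneg _)
  exact ⟨i, Finset.mem_univ i, pow_two_pos_of_ne_zero hi⟩

lemma euclNorm_smul {m : ℕ} (c : ℝ) (v : Fin m → ℝ) :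
    euclNorm (c • v) = |c| * euclNorm v := by
  simp only [euclNorm, Pi.smul_apply, smul_eq_mul, mul_pow, ← Finset.mul_sum]
  rw [Real.sqrt_mul (sq_nonneg c), Real.sqrt_sq_eq_abs]

/-- Triangle inequality for `euclNorm`, via `EuclideanSpace`. -/
lemma euclNorm_eq_norm {m : ℕ} (v : Fin m → ℝ) :
    euclNorm v = ‖(WithLp.equiv 2 (Fin m → ℝ)).symm v‖ := by
  rw [EuclideanSpace.norm_eq, euclNorm]
  congr 1
  refine Finset.sum_congr rfl fun i _ => ?_
  rw [Real.norm_eq_abs, sq_abs]; rfl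

lemma euclNorm_add_le {m : ℕ} (v w : Fin m → ℝ) :
    euclNorm (v + w) ≤ euclNorm v + euclNorm w := by
  simp only [euclNorm_eq_norm]
  rw [show (WithLp.equiv 2 (Fin m → ℝ)).symm (v + w)
      = (WithLp.equiv 2 (Fin m → ℝ)).symm v + (WithLp.equiv 2 (Fin m → ℝ)).symm w from rfl]
  exact norm_add_le _ _

/-- Cauchy–Schwarz: `‖M k‖ ≤ ‖M‖_F ‖k‖`. -/
lemma euclNorm_mulVec_le {m n : ℕ} (M : Matrix (Fin m) (Fin n) ℝ) (k : Fin n → ℝ) :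
    euclNorm (M.mulVec k) ≤ frobeniusNorm M * euclNorm k := by
  rw [euclNorm, frobeniusNorm, euclNorm, ← Real.sqrt_mul (x := ∑ i, ∑ j, M i j ^ 2)
    (Finset.sum_nonneg fun i _ => Finset.sum_nonneg fun j _ => sq_nonneg _)]
  apply Real.sqrt_le_sqrt
  rw [Finset.sum_mul]
  refine Finset.sum_le_sum fun i _ => ?_
  exact Finset.sum_mul_sq_le_sq_mul_sq Finset.univ (fun j => M i j) k

/-- Pointwise equality of the robust and regularized objectives. -/
lemma robustObj_eq_regObj {m n : ℕ} (hm : 0 < m)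
    (G : Matrix (Fin m) (Fin n) ℝ) (a : Fin m → ℝ) (lam : ℝ) (hlam : 0 ≤ lam)
    (k : Fin n → ℝ) : robustObj G a lam k = regObj G a lam k := by
  set r : Fin m → ℝ := G.mulVec k - a with hr
  set S := {x : ℝ | ∃ Δ : Matrix (Fin m) (Fin n) ℝ, frobeniusNorm Δ ≤ lam ∧
        x = euclNorm ((G + Δ).mulVec k - a)}
  -- every element of S is ≤ regObj
  have hub : ∀ x ∈ S, x ≤ regObj G a lam k := by
    rintro x ⟨Δ, hΔ, rfl⟩
    have h1 : (G + Δ).mulVec k - a = r + Δ.mulVec k := by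
      rw [Matrix.add_mulVec, hr]; abel
    rw [h1]
    calc euclNorm (r + Δ.mulVec k) ≤ euclNorm r + euclNorm (Δ.mulVec k) :=
          euclNorm_add_le _ _
      _ ≤ euclNorm r + frobeniusNorm Δ * euclNorm k := by
          linarith [euclNorm_mulVec_le Δ k]
      _ ≤ regObj G a lam k := by
          unfold regObj
          have := mul_le_mul_of_nonneg_right hΔ (euclNorm_nonneg k)
          rw [← hr]; linarith
  -- regObj is attained
  have hmem : regObj G a lam k ∈ S := by
    by_cases hk : k = 0
    · refine ⟨0, by simpa [frobeniusNorm] using hlam, ?_⟩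
      simp [regObj, hk, euclNorm_zero]
    · have hkpos : 0 < euclNorm k := euclNorm_pos hk
      -- unit vector u
      set u : Fin m → ℝ := if r = 0 then (fun i => if i = ⟨0, hm⟩ then 1 else 0)
        else (euclNorm r)⁻¹ • r with hu
      have hu_sq : ∑ i, (u i) ^ 2 = 1 := by
        by_cases h0 : r = 0
        · simp only [hu, if_pos h0]
          rw [Finset.sum_eq_single (⟨0, hm⟩ : Fin m)] <;> simp +contextual
        · simp only [hu, if_neg h0, Pi.smul_apply, smul_eq_mul, mul_pow, ← Finset.mul_sum]
          rw [← euclNorm_sq r, inv_pow]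
          exact inv_mul_cancel₀ (pow_ne_zero 2 (ne_of_gt (euclNorm_pos h0)))
      have hu_norm : euclNorm u = 1 := by
        rw [euclNorm, hu_sq, Real.sqrt_one]
      set Δ : Matrix (Fin m) (Fin n) ℝ := fun i j => (lam / euclNorm k) * u i * k j with hΔdef
      have hΔF : frobeniusNorm Δ = lam := by
        rw [frobeniusNorm]
        have : ∑ i, ∑ j, (Δ i j) ^ 2
            = (lam / euclNorm k) ^ 2 * ((∑ i, (u i) ^ 2) * ∑ j, (k j) ^ 2) := by
          rw [Finset.sum_mul_sum, Finset.mul_sum]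
          refine Finset.sum_congr rfl fun i _ => ?_
          rw [Finset.mul_sum]
          refine Finset.sum_congr rfl fun j _ => ?_
          simp only [hΔdef]; ring
        rw [this, hu_sq, one_mul, ← euclNorm_sq k, div_pow, div_mul_cancel₀ _ (by positivity)]
        exact Real.sqrt_sq hlam
      have hΔk : Δ.mulVec k = (lam * euclNorm k) • u := by
        funext i
        simp only [Matrix.mulVec, dotProduct, hΔdef, Pi.smul_apply, smul_eq_mul]
        have : ∑ j, lam / euclNorm k * u i * k j * k j
            = (lam / euclNorm k) * u i * ∑ j, (k j) ^ 2 := by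
          rw [Finset.mul_sum]
          exact Finset.sum_congr rfl fun j _ => by ring
        rw [this, ← euclNorm_sq k]
        field_simp
      refine ⟨Δ, le_of_eq hΔF, ?_⟩
      have h1 : (G + Δ).mulVec k - a = r + (lam * euclNorm k) • u := by
        rw [Matrix.add_mulVec, hΔk, hr]; abel
      rw [h1, regObj, ← hr]
      by_cases h0 : r = 0
      · rw [h0, zero_add, euclNorm_smul, hu_norm, mul_one,
          abs_of_nonneg (by positivity), euclNorm_zero, zero_add]
      · have hrpos : 0 < euclNorm r := euclNorm_pos h0
        have hcomb : r + (lam * euclNorm k) • u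
            = (1 + lam * euclNorm k / euclNorm r) • r := by
          simp only [hu, if_neg h0, smul_smul]
          funext i
          simp only [Pi.add_apply, Pi.smul_apply, smul_eq_mul]
          field_simp
        rw [hcomb, euclNorm_smul, abs_of_nonneg (by positivity), add_mul, one_mul,
          div_mul_cancel₀ _ (ne_of_gt hrpos)]
  -- conclude sSup S = regObj
  apply le_antisymm
  · exact csSup_le ⟨_, hmem⟩ hub
  · exact le_csSup ⟨_, hub⟩ hmem

/-- The infimum over `k` of the robust objective equals the infimum over `k` of the
regularized objective, and `k` minimizes one objective iff it minimizes the other. -/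
theorem robust_eq_regularized (m n : ℕ) (hm : 0 < m) (hn : 0 < n)
    (G : Matrix (Fin m) (Fin n) ℝ) (a : Fin m → ℝ) (lam : ℝ) (hlam : 0 ≤ lam) :
    (⨅ k : Fin n → ℝ, robustObj G a lam k) = (⨅ k : Fin n → ℝ, regObj G a lam k) ∧
    ∀ k : Fin n → ℝ,
      ((∀ k' : Fin n → ℝ, robustObj G a lam k ≤ robustObj G a lam k') ↔
        (∀ k' : Fin n → ℝ, regObj G a lam k ≤ regObj G a lam k')) := by
  have h : ∀ k, robustObj G a lam k = regObj G a lam k :=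
    fun k => robustObj_eq_regObj hm G a lam hlam k
  constructor
  · exact iInf_congr h
  · intro k
    simp only [h]
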